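/- arXiv:2411.19864 — 2 statements merged into one kernel-verified Lean document; each statement's English description precedes it below -/
import Mathlib

section
/- The Lebesgue area (two-dimensional volume) of the region {(x, y) ∈ ℝ² : x⁴ + y⁴ ≤ 1} equals 2√2 · ∫₀¹ 1/√(1 − r⁴) dr. -/
open MeasureTheory Set

/-! Auxiliary material for the squircle area theorem. -/

noncomputable def aa : ℝ := ((1:ℝ)/2) ^ ((1/4:ℝ))

lemma aa_pos : 0 < aa := Real.rpow_pos_of_pos (by norm_num) _

lemma aa_lt_one : aa < 1 := Real.rpow_lt_one (by norm_num) (by norm_num) (by norm_num)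

lemma aa_pow4 : aa ^ 4 = 1/2 := by
  unfold aa
  rw [← Real.rpow_natCast (((1:ℝ)/2) ^ ((1/4:ℝ))) 4, ← Real.rpow_mul (by norm_num)]
  norm_num

lemma sqrt2_aa_aa : Real.sqrt 2 * aa * aa = 1 := by
  have h2 : aa * aa = Real.sqrt (1/2) := by
    rw [show aa * aa = aa ^ 2 by ring, Real.sqrt_eq_rpow]
    unfold aa
    rw [← Real.rpow_natCast (((1:ℝ)/2) ^ ((1/4:ℝ))) 2, ← Real.rpow_mul (by norm_num)]
    norm_num
  rw [mul_assoc, h2, ← Real.sqrt_mul (by norm_num)]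
  norm_num

lemma contOn_aux (q : ℝ) {s : Set ℝ} (hs : ∀ x ∈ s, 1 - x^4 ≠ 0) :
    ContinuousOn (fun x : ℝ => (1 - x^4) ^ q) s := by
  exact ContinuousOn.rpow_const (by fun_prop) (fun x hx => Or.inl (hs x hx))

lemma integrableOn_aux {p : ℝ} (hp0 : 0 ≤ p) (hp1 : p < 1) :
    IntegrableOn (fun x : ℝ => (1 - x^4) ^ (-p)) (Ioo 0 1) := by
  have hdom : IntegrableOn (fun x : ℝ => (1 - x) ^ (-p)) (Ioo 0 1) := by
    have h1 : IntervalIntegrable (fun x : ℝ => x ^ (-p)) volume 0 1 :=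
      intervalIntegral.intervalIntegrable_rpow' (by linarith)
    have h2 := h1.comp_sub_left 1
    simp only [sub_zero, sub_self] at h2
    exact (intervalIntegrable_iff_integrableOn_Ioo_of_le zero_le_one).mp h2.symm
  refine hdom.integrable.mono ?_ ?_
  · exact (contOn_aux (-p) (fun x hx => by
      nlinarith [hx.1, hx.2, pow_lt_one₀ (le_of_lt hx.1) hx.2 (by norm_num : 4 ≠ 0)])
        ).aestronglyMeasurable measurableSet_Ioo
  rw [ae_restrict_iff' measurableSet_Ioo]
  filter_upwards with x hx
  obtain ⟨hx0, hx1⟩ := hx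
  have h4 : x ^ 4 ≤ x := by
    calc x ^ 4 ≤ x ^ 1 := pow_le_pow_of_le_one hx0.le hx1.le (by norm_num)
    _ = x := pow_one x
  have hpos : (0:ℝ) < 1 - x := by linarith
  have hle : 1 - x ≤ 1 - x ^ 4 := by linarith
  rw [Real.norm_eq_abs, Real.norm_eq_abs, abs_of_nonneg (Real.rpow_nonneg (by linarith) _),
    abs_of_nonneg (Real.rpow_nonneg hpos.le _)]
  exact Real.rpow_le_rpow_of_nonpos hpos hle (by linarith)

lemma contF : Continuous (fun x : ℝ => x * (1-x^4) ^ (1/4:ℝ)) := by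
  exact continuous_id.mul (Continuous.rpow_const (by fun_prop) (fun x => Or.inr (by norm_num)))

lemma contG : Continuous (fun x : ℝ => (1-x^4) ^ (1/4:ℝ)) :=
  Continuous.rpow_const (by fun_prop) (fun x => Or.inr (by norm_num))

lemma deriv_F {x : ℝ} (hx : x ∈ Ioo (0:ℝ) 1) :
    HasDerivAt (fun x : ℝ => x * (1-x^4) ^ (1/4:ℝ))
      (2*(1-x^4) ^ (1/4:ℝ) - (1-x^4) ^ (-(3/4):ℝ)) x := by
  obtain ⟨hx0, hx1⟩ := hx
  have hu : (0:ℝ) < 1 - x^4 := by nlinarith [pow_lt_one₀ hx0.le hx1 (by norm_num : 4 ≠ 0)]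
  have h1 : HasDerivAt (fun x : ℝ => 1 - x^4) (-(4*x^3)) x := by
    simpa using ((hasDerivAt_pow 4 x).const_sub 1)
  have h2 : HasDerivAt (fun x : ℝ => (1-x^4) ^ (1/4:ℝ))
      ((-(4*x^3)) * (1/4) * (1-x^4) ^ ((1/4:ℝ) - 1)) x :=
    h1.rpow_const (Or.inl hu.ne')
  have h3 := (hasDerivAt_id x).mul h2
  convert h3 using 1
  · rfl
  · rfl
  · rfl
  have e1 : ((1/4:ℝ) - 1) = -(3/4 : ℝ) := by norm_num
  rw [e1]
  have e2 : (1-x^4) ^ (1/4:ℝ) = (1-x^4) * (1-x^4) ^ (-(3/4):ℝ) := by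
    rw [← Real.rpow_one_add' (le_of_lt hu) (by norm_num)]
    norm_num
  simp only [id_eq]
  rw [e2]; ring

lemma intInt_h : IntervalIntegrable (fun x : ℝ => (1-x^4) ^ (-(3/4):ℝ)) volume 0 1 := by
  rw [intervalIntegrable_iff_integrableOn_Ioo_of_le zero_le_one]
  exact integrableOn_aux (by norm_num) (by norm_num)

lemma key1 : ∫ x in (0:ℝ)..1, (1-x^4) ^ (-(3/4):ℝ)
    = 2 * ∫ x in (0:ℝ)..1, (1-x^4) ^ (1/4:ℝ) := by
  have hint : IntervalIntegrable
      (fun x : ℝ => 2*(1-x^4) ^ (1/4:ℝ) - (1-x^4) ^ (-(3/4):ℝ)) volume 0 1 :=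
    ((contG.intervalIntegrable 0 1).const_mul 2).sub intInt_h
  have hftc := intervalIntegral.integral_eq_sub_of_hasDeriv_right_of_le zero_le_one
    (contF.continuousOn)
    (fun x hx => (deriv_F hx).hasDerivWithinAt) hint
  have h0 : (fun x : ℝ => x * (1-x^4) ^ (1/4:ℝ)) 1 - (fun x : ℝ => x * (1-x^4) ^ (1/4:ℝ)) 0 = 0 := by
    simp only []
    norm_num [Real.zero_rpow]
  rw [h0] at hftc
  rw [intervalIntegral.integral_sub ((contG.intervalIntegrable 0 1).const_mul 2) intInt_h,
    intervalIntegral.integral_const_mul] at hftc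
  linarith

lemma eta_deriv {y : ℝ} (h : 1 - y^4 ≠ 0) :
    HasDerivAt (fun y : ℝ => (1-y^4) ^ (1/4:ℝ))
      (-(y^3 * (1-y^4) ^ (-(3/4):ℝ))) y := by
  have h1 : HasDerivAt (fun y : ℝ => 1 - y^4) (-(4*y^3)) y := by
    simpa using ((hasDerivAt_pow 4 y).const_sub 1)
  have h2 := h1.rpow_const (p := (1/4:ℝ)) (Or.inl h)
  convert h2 using 1
  rw [show ((1/4:ℝ) - 1) = -(3/4:ℝ) by norm_num]
  ring

lemma key2 : ∫ x in Ioo aa 1, (1-x^4) ^ (-(3/4):ℝ)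
    = ∫ y in Ioo 0 aa, (1-y^4) ^ (-(3/4):ℝ) := by
  set η : ℝ → ℝ := fun y => (1-y^4) ^ (1/4:ℝ) with hη
  have hbase : ∀ y ∈ Icc (0:ℝ) aa, 0 < 1 - y^4 := by
    intro y hy
    have : y^4 ≤ aa^4 := pow_le_pow_left₀ hy.1 hy.2 4
    rw [aa_pow4] at this; linarith
  have hanti : StrictAntiOn η (Icc 0 aa) := by
    intro y1 h1 y2 h2 h12
    apply Real.rpow_lt_rpow (le_of_lt (hbase y2 h2)) _ (by norm_num)
    have : y1^4 < y2^4 := pow_lt_pow_left₀ h12 h1.1 (by norm_num)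
    linarith
  have heta0 : ((1:ℝ) - (0:ℝ)^4) ^ (1/4:ℝ) = 1 := by norm_num
  have hetaa : ((1:ℝ) - aa^4) ^ (1/4:ℝ) = aa := by
    rw [aa_pow4]; norm_num [aa]
  have himg : η '' Ioo 0 aa = Ioo aa 1 := by
    apply Subset.antisymm
    · have h := hanti.image_Ioo_subset
      simp only [hη] at h
      rwa [heta0, hetaa] at h
    · have h := intermediate_value_Ioo' (le_of_lt aa_pos)
        ((Continuous.rpow_const (by fun_prop) (fun x => Or.inr (by norm_num))).continuousOn
          : ContinuousOn η (Icc 0 aa))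
      rwa [heta0, hetaa] at h
  have hd : ∀ y ∈ Ioo (0:ℝ) aa, HasDerivWithinAt η
      (-(y^3 * (1-y^4) ^ (-(3/4):ℝ))) (Ioo 0 aa) y := fun y hy =>
    (eta_deriv (ne_of_gt (hbase y (Ioo_subset_Icc_self hy)))).hasDerivWithinAt
  rw [← himg, integral_image_eq_integral_abs_deriv_smul measurableSet_Ioo hd
    (hanti.injOn.mono Ioo_subset_Icc_self)]
  apply setIntegral_congr_fun measurableSet_Ioo
  intro y hy
  have hy0 : 0 < y := hy.1
  have hu : 0 < 1 - y^4 := hbase y (Ioo_subset_Icc_self hy)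
  have hpos : 0 ≤ y^3 * (1-y^4) ^ (-(3/4):ℝ) :=
    mul_nonneg (by positivity) (Real.rpow_nonneg hu.le _)
  simp only [smul_eq_mul, abs_neg, abs_of_nonneg hpos, hη]
  have e1 : ((1-y^4) ^ (1/4:ℝ)) ^ 4 = 1 - y^4 := by
    rw [← Real.rpow_natCast ((1-y^4) ^ (1/4:ℝ)) 4, ← Real.rpow_mul hu.le]
    norm_num
  rw [e1]
  have e2 : (1 - (1 - y^4)) = y^4 := by ring
  rw [e2]
  have e3 : (y^4 : ℝ) ^ (-(3/4):ℝ) = (y^3)⁻¹ := by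
    rw [← Real.rpow_natCast y 4, ← Real.rpow_mul hy0.le]
    norm_num
  rw [e3]
  have : y^3 ≠ 0 := by positivity
  field_simp

lemma psi_deriv {x : ℝ} (hu : 0 < 1 - x^4) :
    HasDerivAt (fun x : ℝ => Real.sqrt 2 * x * (1-x^4) ^ (1/4:ℝ))
      (Real.sqrt 2 * (1-2*x^4) * (1-x^4) ^ (-(3/4):ℝ)) x := by
  have h1 : HasDerivAt (fun x : ℝ => 1 - x^4) (-(4*x^3)) x := by
    simpa using ((hasDerivAt_pow 4 x).const_sub 1)
  have h2 := h1.rpow_const (p := (1/4:ℝ)) (Or.inl hu.ne')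
  have h3 : HasDerivAt (fun x : ℝ => Real.sqrt 2 * x) (Real.sqrt 2) x := by
    simpa using (hasDerivAt_id x).const_mul (Real.sqrt 2)
  have h4 := h3.mul h2
  convert h4 using 1
  · rfl
  · rfl
  · rfl
  rw [show ((1/4:ℝ) - 1) = -(3/4:ℝ) by norm_num]
  have e2 : (1-x^4) ^ (1/4:ℝ) = (1-x^4) * (1-x^4) ^ (-(3/4):ℝ) := by
    rw [← Real.rpow_one_add' (le_of_lt hu) (by norm_num)]
    norm_num
  rw [e2]; ring

lemma psi_mono : StrictMonoOn (fun x : ℝ => Real.sqrt 2 * x * (1-x^4) ^ (1/4:ℝ)) (Icc 0 aa) := by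
  apply strictMonoOn_of_deriv_pos (convex_Icc 0 aa)
  · exact ((continuous_const.mul continuous_id).mul
      (Continuous.rpow_const (by fun_prop) (fun x => Or.inr (by norm_num)))).continuousOn
  · intro x hx
    rw [interior_Icc] at hx
    have hx4 : x^4 < 1/2 := by
      have := pow_lt_pow_left₀ hx.2 hx.1.le (by norm_num : 4 ≠ 0)
      rwa [aa_pow4] at this
    have hu : 0 < 1 - x^4 := by linarith
    rw [(psi_deriv hu).deriv]
    have : (0:ℝ) < Real.sqrt 2 := by positivity
    have h24 : (0:ℝ) < 1 - 2*x^4 := by linarith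
    positivity

lemma key3 : ∫ r in Ioo (0:ℝ) 1, (1-r^4) ^ (-(1/2):ℝ)
    = Real.sqrt 2 * ∫ x in Ioo 0 aa, (1-x^4) ^ (-(3/4):ℝ) := by
  set ψ : ℝ → ℝ := fun x => Real.sqrt 2 * x * (1-x^4) ^ (1/4:ℝ) with hψ
  have hpsi0 : ψ 0 = 0 := by simp [hψ]
  have e : ((1:ℝ) - aa^4) ^ (1/4:ℝ) = aa := by rw [aa_pow4]; norm_num [aa]
  have hpsia : ψ aa = 1 := by
    simp only [hψ]; rw [e]; exact sqrt2_aa_aa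
  have hbase : ∀ x ∈ Icc (0:ℝ) aa, 0 < 1 - x^4 := by
    intro x hx
    have : x^4 ≤ aa^4 := pow_le_pow_left₀ hx.1 hx.2 4
    rw [aa_pow4] at this; linarith
  have h24 : ∀ x ∈ Ioo (0:ℝ) aa, 0 < 1 - 2*x^4 := by
    intro x hx
    have := pow_lt_pow_left₀ hx.2 hx.1.le (by norm_num : 4 ≠ 0)
    rw [aa_pow4] at this; linarith
  have v0 : Real.sqrt 2 * (0:ℝ) * ((1:ℝ) - 0^4) ^ (1/4:ℝ) = 0 := by norm_num
  have va : Real.sqrt 2 * aa * ((1:ℝ) - aa^4) ^ (1/4:ℝ) = 1 := by rw [e]; exact sqrt2_aa_aa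
  have himg : ψ '' Ioo 0 aa = Ioo 0 1 := by
    apply Subset.antisymm
    · have h := psi_mono.image_Ioo_subset
      rw [v0, va] at h
      exact h
    · have h := intermediate_value_Ioo (le_of_lt aa_pos)
        (((continuous_const.mul continuous_id).mul
          (Continuous.rpow_const (by fun_prop) (fun x => Or.inr (by norm_num)))).continuousOn
            : ContinuousOn ψ (Icc 0 aa))
      simp only [Pi.mul_apply, id_eq] at h
      rw [v0, va] at h
      exact h
  have hd : ∀ x ∈ Ioo (0:ℝ) aa, HasDerivWithinAt ψ
      (Real.sqrt 2 * (1-2*x^4) * (1-x^4) ^ (-(3/4):ℝ)) (Ioo 0 aa) x := fun x hx =>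
    (psi_deriv (hbase x (Ioo_subset_Icc_self hx))).hasDerivWithinAt
  rw [← himg, integral_image_eq_integral_abs_deriv_smul measurableSet_Ioo hd
    ((psi_mono.injOn).mono Ioo_subset_Icc_self), ← integral_const_mul]
  apply setIntegral_congr_fun measurableSet_Ioo
  intro x hx
  have hu : 0 < 1 - x^4 := hbase x (Ioo_subset_Icc_self hx)
  have h24x : 0 < 1 - 2*x^4 := h24 x hx
  have hs2 : (0:ℝ) < Real.sqrt 2 := by positivity
  have hdpos : 0 < Real.sqrt 2 * (1-2*x^4) * (1-x^4) ^ (-(3/4):ℝ) := by positivity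
  have e1 : ((1-x^4) ^ (1/4:ℝ)) ^ 4 = 1 - x^4 := by
    rw [← Real.rpow_natCast ((1-x^4) ^ (1/4:ℝ)) 4, ← Real.rpow_mul hu.le]
    norm_num
  have e4 : ψ x ^ 4 = 4*x^4*(1-x^4) := by
    simp only [hψ]
    rw [mul_pow, mul_pow, e1,
      show (Real.sqrt 2)^4 = ((Real.sqrt 2)^2)^2 by ring, Real.sq_sqrt (by norm_num : (0:ℝ) ≤ 2)]
    ring
  have e5 : (1 : ℝ) - ψ x ^ 4 = (1-2*x^4)^2 := by rw [e4]; ring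
  have e6 : ((1-2*x^4)^2 : ℝ) ^ (-(1/2):ℝ) = (1-2*x^4)⁻¹ := by
    rw [Real.rpow_neg (sq_nonneg _), ← Real.sqrt_eq_rpow, Real.sqrt_sq h24x.le]
  simp only [smul_eq_mul, abs_of_pos hdpos]
  rw [e5, e6]
  field_simp

lemma volume_squircle : volume {p : ℝ × ℝ | p.1 ^ 4 + p.2 ^ 4 ≤ 1}
    = ENNReal.ofReal (∫ x in (-1:ℝ)..1, 2*(1-x^4) ^ (1/4:ℝ)) := by
  have hS : MeasurableSet {p : ℝ × ℝ | p.1 ^ 4 + p.2 ^ 4 ≤ 1} :=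
    (isClosed_le (by fun_prop) continuous_const).measurableSet
  rw [Measure.volume_eq_prod, Measure.prod_apply hS]
  have hsec : ∀ x : ℝ, volume (Prod.mk x ⁻¹' {p : ℝ × ℝ | p.1 ^ 4 + p.2 ^ 4 ≤ 1})
      = ENNReal.ofReal ((Icc (-1:ℝ) 1).indicator (fun x => 2*(1-x^4) ^ (1/4:ℝ)) x) := by
    intro x
    by_cases hx : x ∈ Icc (-1:ℝ) 1
    · have hx4 : x^4 ≤ 1 := by
        rw [show x^4 = |x|^4 by rw [pow_abs, abs_of_nonneg (by positivity : (0:ℝ) ≤ x^4)]]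
        apply pow_le_one₀ (abs_nonneg x)
        rw [abs_le]; exact ⟨hx.1, hx.2⟩
      have hc : (0:ℝ) ≤ 1 - x^4 := by linarith
      have hset : (Prod.mk x ⁻¹' {p : ℝ × ℝ | p.1 ^ 4 + p.2 ^ 4 ≤ 1})
          = Icc (-((1-x^4) ^ (1/4:ℝ))) ((1-x^4) ^ (1/4:ℝ)) := by
        ext y
        simp only [mem_preimage, mem_setOf_eq, mem_Icc, ← abs_le]
        have e1 : ((1-x^4) ^ (1/4:ℝ)) ^ 4 = 1 - x^4 := by
          rw [← Real.rpow_natCast ((1-x^4) ^ (1/4:ℝ)) 4, ← Real.rpow_mul hc]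
          norm_num
        constructor
        · intro h
          have hy4 : |y|^4 ≤ ((1-x^4) ^ (1/4:ℝ))^4 := by
            rw [e1, pow_abs, abs_of_nonneg (by positivity : (0:ℝ) ≤ y^4)]
            linarith
          exact le_of_pow_le_pow_left₀ (by norm_num) (Real.rpow_nonneg hc _) hy4
        · intro h
          have := pow_le_pow_left₀ (abs_nonneg y) h 4
          rw [e1, pow_abs, abs_of_nonneg (by positivity : (0:ℝ) ≤ y^4)] at this
          linarith
      rw [hset, Real.volume_Icc, indicator_of_mem hx]
      congr 1
      ring
    · have hx4 : 1 < x^4 := by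
        rw [show x^4 = |x|^4 by rw [pow_abs, abs_of_nonneg (by positivity : (0:ℝ) ≤ x^4)]]
        apply one_lt_pow₀ _ (by norm_num)
        simp only [mem_Icc, not_and_or, not_le] at hx
        rcases hx with h | h
        · rw [abs_of_neg (by linarith)]; linarith
        · rw [abs_of_pos (by linarith)]; linarith
      have hset : (Prod.mk x ⁻¹' {p : ℝ × ℝ | p.1 ^ 4 + p.2 ^ 4 ≤ 1}) = ∅ := by
        ext y
        simp only [mem_preimage, mem_setOf_eq, mem_empty_iff_false, iff_false, not_le]
        nlinarith [sq_nonneg (y^2), sq_nonneg y, pow_two_nonneg (y^2)]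
      rw [hset, indicator_of_notMem hx]
      simp
  simp_rw [hsec]
  rw [← MeasureTheory.ofReal_integral_eq_lintegral_ofReal]
  · rw [integral_indicator measurableSet_Icc, MeasureTheory.integral_Icc_eq_integral_Ioc,
      ← intervalIntegral.integral_of_le (by norm_num : (-1:ℝ) ≤ 1)]
  · rw [integrable_indicator_iff measurableSet_Icc]
    exact (continuous_const.mul (Continuous.rpow_const (by fun_prop)
      (fun x => Or.inr (by norm_num)))).integrableOn_Icc
  · filter_upwards with x
    apply indicator_nonneg
    intro y hy
    have h1 : y^4 ≤ 1 := by
      rw [show y^4 = |y|^4 by rw [pow_abs, abs_of_nonneg (by positivity : (0:ℝ) ≤ y^4)]]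
      apply pow_le_one₀ (abs_nonneg y)
      rw [abs_le]; exact ⟨hy.1, hy.2⟩
    have : (0:ℝ) ≤ 1 - y^4 := by linarith
    positivity

theorem squircle_area_eq_two_sqrt_two_mul_lemniscate_integral :
    volume {p : ℝ × ℝ | p.1 ^ 4 + p.2 ^ 4 ≤ 1} =
      ENNReal.ofReal (2 * Real.sqrt 2 * ∫ r in (0:ℝ)..1, 1 / Real.sqrt (1 - r ^ 4)) := by
  rw [volume_squircle]
  congr 1
  -- rewrite the lemniscate integral as a set integral with rpow
  have hK : ∫ r in (0:ℝ)..1, 1 / Real.sqrt (1 - r ^ 4)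
      = ∫ r in Ioo (0:ℝ) 1, (1-r^4) ^ (-(1/2):ℝ) := by
    rw [intervalIntegral.integral_of_le zero_le_one, MeasureTheory.integral_Ioc_eq_integral_Ioo]
    apply setIntegral_congr_fun measurableSet_Ioo
    intro r hr
    have hu : (0:ℝ) < 1 - r^4 := by
      nlinarith [pow_lt_one₀ hr.1.le hr.2 (by norm_num : 4 ≠ 0)]
    show 1 / Real.sqrt (1 - r^4) = (1-r^4) ^ (-(1/2):ℝ)
    rw [Real.sqrt_eq_rpow, one_div, ← Real.rpow_neg hu.le]
  -- split the interval integral of h at aa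
  have hsub1 : IntervalIntegrable (fun x : ℝ => (1-x^4) ^ (-(3/4):ℝ)) volume 0 aa :=
    intInt_h.mono_set (by
      rw [uIcc_of_le (le_of_lt aa_pos), uIcc_of_le zero_le_one]
      exact Icc_subset_Icc le_rfl (le_of_lt aa_lt_one))
  have hsub2 : IntervalIntegrable (fun x : ℝ => (1-x^4) ^ (-(3/4):ℝ)) volume aa 1 :=
    intInt_h.mono_set (by
      rw [uIcc_of_le (le_of_lt aa_lt_one), uIcc_of_le zero_le_one]
      exact Icc_subset_Icc (le_of_lt aa_pos) le_rfl)
  have hsplit : ∫ x in (0:ℝ)..1, (1-x^4) ^ (-(3/4):ℝ)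
      = (∫ x in Ioo (0:ℝ) aa, (1-x^4) ^ (-(3/4):ℝ)) + ∫ x in Ioo aa 1, (1-x^4) ^ (-(3/4):ℝ) := by
    rw [← intervalIntegral.integral_add_adjacent_intervals hsub1 hsub2,
      intervalIntegral.integral_of_le (le_of_lt aa_pos),
      intervalIntegral.integral_of_le (le_of_lt aa_lt_one),
      MeasureTheory.integral_Ioc_eq_integral_Ioo, MeasureTheory.integral_Ioc_eq_integral_Ioo]
  have hH : ∫ x in (0:ℝ)..1, (1-x^4) ^ (-(3/4):ℝ)
      = 2 * ∫ x in Ioo (0:ℝ) aa, (1-x^4) ^ (-(3/4):ℝ) := by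
    rw [hsplit, key2]; ring
  -- evenness of the quarter-power integrand
  have heven : ∫ x in (-1:ℝ)..1, 2*(1-x^4) ^ (1/4:ℝ)
      = 4 * ∫ x in (0:ℝ)..1, (1-x^4) ^ (1/4:ℝ) := by
    have hadd := intervalIntegral.integral_add_adjacent_intervals (μ := volume)
      (contG.intervalIntegrable (-1) 0) (contG.intervalIntegrable 0 1)
    have hneg : ∫ x in (-1:ℝ)..0, (1-x^4) ^ (1/4:ℝ) = ∫ x in (0:ℝ)..1, (1-x^4) ^ (1/4:ℝ) := by
      have := intervalIntegral.integral_comp_neg (a := (0:ℝ)) (b := (1:ℝ))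
        (f := fun x : ℝ => (1-x^4) ^ (1/4:ℝ))
      simp only [neg_zero] at this
      rw [← this]
      congr 1
      ext x
      rw [show (-x)^4 = x^4 by ring]
    rw [intervalIntegral.integral_const_mul, ← hadd, hneg]
    ring
  have h2 : Real.sqrt 2 * Real.sqrt 2 = 2 := Real.mul_self_sqrt (by norm_num)
  rw [heven, hK, key3,
    show (2:ℝ) * Real.sqrt 2 * (Real.sqrt 2 * ∫ x in Ioo (0:ℝ) aa, (1-x^4) ^ (-(3/4):ℝ))
      = 2*(Real.sqrt 2*Real.sqrt 2) * ∫ x in Ioo (0:ℝ) aa, (1-x^4) ^ (-(3/4):ℝ) by ring, h2]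
  linarith [hH, key1]
end

section
/- For every R ∈ [0, 1], setting T = √((1 − R²)/(1 + R²)), one has ∫₀^{√((1−R⁴)/(1+R⁴))} 1/√(1 − r⁴) dr = √2 · ∫₀^T 1/√(1 + v⁴) dv. -/
open Set MeasureTheory intervalIntegral

noncomputable def lemf (t : ℝ) : ℝ := Real.sqrt 2 * t / Real.sqrt (1 + t ^ 4)

lemma lemf_s_pos (t : ℝ) : 0 < Real.sqrt (1 + t ^ 4) := Real.sqrt_pos.2 (by positivity)

lemma lemf_s_sq (t : ℝ) : Real.sqrt (1 + t ^ 4) ^ 2 = 1 + t ^ 4 :=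
  Real.sq_sqrt (by positivity)

lemma lemf_hasDerivAt (t : ℝ) :
    HasDerivAt lemf (Real.sqrt 2 * (1 - t ^ 4) / ((1 + t ^ 4) * Real.sqrt (1 + t ^ 4))) t := by
  have h1 : HasDerivAt (fun t : ℝ => 1 + t ^ 4) (4 * t ^ 3) t := by
    simpa using (hasDerivAt_pow 4 t).const_add 1
  have h2 : HasDerivAt (fun t : ℝ => Real.sqrt (1 + t ^ 4))
      (4 * t ^ 3 / (2 * Real.sqrt (1 + t ^ 4))) t := h1.sqrt (by positivity)
  have h3 : HasDerivAt (fun t : ℝ => Real.sqrt 2 * t) (Real.sqrt 2) t := by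
    simpa using (hasDerivAt_id t).const_mul (Real.sqrt 2)
  have h4 := h3.div h2 (ne_of_gt (lemf_s_pos t))
  convert h4 using 1
  · rfl
  · rfl
  · rfl
  have hs := lemf_s_sq t
  have hs' := (lemf_s_pos t).ne'
  field_simp
  linear_combination (-4 * t ^ 4) * hs

lemma lemf_sq (t : ℝ) : lemf t ^ 2 = 2 * t ^ 2 / (1 + t ^ 4) := by
  unfold lemf
  rw [div_pow, mul_pow, Real.sq_sqrt (by norm_num : (0:ℝ) ≤ 2), lemf_s_sq]

lemma lemf_pow4 (t : ℝ) : 1 - lemf t ^ 4 = ((1 - t ^ 4) / (1 + t ^ 4)) ^ 2 := by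
  have h : lemf t ^ 4 = (lemf t ^ 2) ^ 2 := by ring
  rw [h, lemf_sq]
  have hpos : (0:ℝ) < 1 + t ^ 4 := by positivity
  field_simp
  ring

lemma lemf_nonneg {t : ℝ} (ht : 0 ≤ t) : 0 ≤ lemf t := by
  unfold lemf; positivity

lemma lemf_le_one {t : ℝ} (ht : 0 ≤ t) : lemf t ≤ 1 := by
  have h2 : lemf t ^ 2 ≤ 1 := by
    rw [lemf_sq]
    rw [div_le_one (by positivity)]
    nlinarith [sq_nonneg (1 - t ^ 2)]
  nlinarith [lemf_nonneg ht]

lemma lemf_lt_one {t : ℝ} (ht : 0 ≤ t) (ht1 : t < 1) : lemf t < 1 := by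
  have h2 : lemf t ^ 2 < 1 := by
    rw [lemf_sq]
    rw [div_lt_one (by positivity)]
    have h : 0 < 1 - t ^ 2 := by nlinarith
    nlinarith [mul_pos h h]
  nlinarith [lemf_nonneg ht]

lemma lemf_key {t : ℝ} (ht : 0 ≤ t) (ht1 : t < 1) :
    Real.sqrt 2 * (1 - t ^ 4) / ((1 + t ^ 4) * Real.sqrt (1 + t ^ 4)) *
      (1 / Real.sqrt (1 - lemf t ^ 4)) = Real.sqrt 2 * (1 / Real.sqrt (1 + t ^ 4)) := by
  have ht4 : t ^ 4 < 1 := pow_lt_one₀ ht ht1 (by norm_num)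
  have h2 : (0:ℝ) < 1 - t ^ 4 := by linarith
  have h3 : (0:ℝ) < 1 + t ^ 4 := by positivity
  have h1 : Real.sqrt (1 - lemf t ^ 4) = (1 - t ^ 4) / (1 + t ^ 4) := by
    rw [lemf_pow4, Real.sqrt_sq (div_nonneg h2.le h3.le)]
  rw [h1]
  have hs := (lemf_s_pos t).ne'
  field_simp

lemma lemf_endpoint {R : ℝ} (hR0 : 0 ≤ R) (hR1 : R ≤ 1) :
    lemf (Real.sqrt ((1 - R ^ 2) / (1 + R ^ 2))) =
      Real.sqrt ((1 - R ^ 4) / (1 + R ^ 4)) := by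
  set T := Real.sqrt ((1 - R ^ 2) / (1 + R ^ 2)) with hTdef
  have hR2 : 0 ≤ 1 - R ^ 2 := by nlinarith
  have hR2' : (0:ℝ) < 1 + R ^ 2 := by positivity
  have hT2 : T ^ 2 = (1 - R ^ 2) / (1 + R ^ 2) :=
    Real.sq_sqrt (div_nonneg hR2 hR2'.le)
  have hTnn : 0 ≤ T := Real.sqrt_nonneg _
  have hsq : lemf T ^ 2 = (1 - R ^ 4) / (1 + R ^ 4) := by
    rw [lemf_sq]
    have hT4 : T ^ 4 = ((1 - R ^ 2) / (1 + R ^ 2)) ^ 2 := by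
      rw [← hT2]; ring
    rw [hT4, hT2]
    have h4 : (0:ℝ) < 1 + R ^ 4 := by positivity
    field_simp
    ring
  calc lemf T = Real.sqrt (lemf T ^ 2) := (Real.sqrt_sq (lemf_nonneg hTnn)).symm
    _ = Real.sqrt ((1 - R ^ 4) / (1 + R ^ 4)) := by rw [hsq]

lemma g_integrableOn :
    IntegrableOn (fun r : ℝ => 1 / Real.sqrt (1 - r ^ 4)) (Icc (0:ℝ) 1) := by
  have hmaj : IntervalIntegrable (fun x : ℝ => (1 - x) ^ (-(1/2) : ℝ)) volume 0 1 := by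
    have h := (intervalIntegral.intervalIntegrable_rpow' (a := 0) (b := 1)
      (r := -(1/2)) (by norm_num)).comp_sub_left 1
    simpa using h.symm
  have hmajIcc : IntegrableOn (fun x : ℝ => (1 - x) ^ (-(1/2) : ℝ)) (Icc (0:ℝ) 1) :=
    (intervalIntegrable_iff_integrableOn_Icc_of_le (by norm_num)).1 hmaj
  refine MeasureTheory.Integrable.mono hmajIcc ?_ ?_
  · refine (Measurable.aestronglyMeasurable ?_).restrict
    have : Measurable fun r : ℝ => (Real.sqrt (1 - r ^ 4))⁻¹ :=
      (Real.continuous_sqrt.measurable.comp (by measurability)).inv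
    simpa [one_div] using this
  · filter_upwards [ae_restrict_mem measurableSet_Icc] with r hr
    obtain ⟨hr0, hr1⟩ := hr
    have hr3 : r ^ 3 ≤ 1 := pow_le_one₀ hr0 hr1
    have h4 : r ^ 4 ≤ r := by nlinarith
    have hA : (0:ℝ) ≤ 1 - r := by linarith
    have hB : 1 - r ≤ 1 - r ^ 4 := by linarith
    have hRHS : (1 - r) ^ (-(1/2) : ℝ) = (Real.sqrt (1 - r))⁻¹ := by
      rw [Real.rpow_neg hA, ← Real.sqrt_eq_rpow]
    rw [Real.norm_of_nonneg (by positivity), Real.norm_of_nonneg (by positivity), hRHS,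
      one_div]
    rcases eq_or_lt_of_le hr1 with h | h
    · subst h; simp
    · have hApos : (0:ℝ) < 1 - r := by linarith
      have h1 : 0 < Real.sqrt (1 - r) := Real.sqrt_pos.2 hApos
      exact inv_anti₀ h1 (Real.sqrt_le_sqrt hB)

lemma lemf_continuous : Continuous lemf := by
  apply Continuous.div (by continuity) (Real.continuous_sqrt.comp (by continuity))
  exact fun t => (lemf_s_pos t).ne'

lemma ae_ne_one : ∀ᵐ t : ℝ ∂volume, t ≠ 1 := by
  rw [MeasureTheory.ae_iff]
  simp only [not_not, Set.setOf_eq_eq_singleton]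
  exact measure_singleton 1

theorem lemniscate_arc_to_D_eq_sqrt_two_mul_squircle_sector
    (R : ℝ) (hR : R ∈ Set.Icc (0:ℝ) 1)
    (T : ℝ) (hT : T = Real.sqrt ((1 - R ^ 2) / (1 + R ^ 2))) :
    ∫ r in (0:ℝ)..Real.sqrt ((1 - R ^ 4) / (1 + R ^ 4)), 1 / Real.sqrt (1 - r ^ 4) =
      Real.sqrt 2 * ∫ v in (0:ℝ)..T, 1 / Real.sqrt (1 + v ^ 4) := by
  obtain ⟨hR0, hR1⟩ := hR
  have hT0 : 0 ≤ T := hT ▸ Real.sqrt_nonneg _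
  have hT1 : T ≤ 1 := by
    rw [hT]
    exact Real.sqrt_le_one.2 ((div_le_one (by positivity)).2 (by nlinarith))
  have hend : lemf T = Real.sqrt ((1 - R ^ 4) / (1 + R ^ 4)) := by
    rw [hT]; exact lemf_endpoint hR0 hR1
  have hf0 : lemf 0 = 0 := by simp [lemf]
  have hmin : min (0:ℝ) T = 0 := min_eq_left hT0
  have hmax : max (0:ℝ) T = T := max_eq_right hT0
  have huIcc : Set.uIcc (0:ℝ) T = Set.Icc 0 T := Set.uIcc_of_le hT0
  set f' : ℝ → ℝ := fun t => Real.sqrt 2 * (1 - t ^ 4) / ((1 + t ^ 4) * Real.sqrt (1 + t ^ 4))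
    with hf'def
  set g : ℝ → ℝ := fun r => 1 / Real.sqrt (1 - r ^ 4) with hgdef
  have hsub : (∫ t in (0:ℝ)..T, f' t • (g ∘ lemf) t) = ∫ u in (lemf 0)..(lemf T), g u := by
    apply intervalIntegral.integral_comp_smul_deriv'''
    · exact lemf_continuous.continuousOn
    · intro x _
      exact (lemf_hasDerivAt x).hasDerivWithinAt
    · rw [hmin, hmax]
      have hcont : ContinuousOn g (Set.Ico (0:ℝ) 1) := by
        apply ContinuousOn.div continuousOn_const
        · exact (Real.continuous_sqrt.comp (by continuity)).continuousOn
        · intro r hr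
          refine ne_of_gt (Real.sqrt_pos.2 ?_)
          have : r ^ 4 < 1 := pow_lt_one₀ hr.1 hr.2 (by norm_num)
          linarith
      refine hcont.mono ?_
      rintro r ⟨t, ht, rfl⟩
      exact ⟨lemf_nonneg ht.1.le, lemf_lt_one ht.1.le (lt_of_lt_of_le ht.2 hT1)⟩
    · refine g_integrableOn.mono_set ?_
      rw [huIcc]
      rintro r ⟨t, ht, rfl⟩
      exact ⟨lemf_nonneg ht.1, lemf_le_one ht.1⟩
    · rw [huIcc]
      have hcont : Continuous fun t : ℝ => Real.sqrt 2 * (1 / Real.sqrt (1 + t ^ 4)) := by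
        apply Continuous.mul continuous_const
        apply Continuous.div continuous_const (Real.continuous_sqrt.comp (by continuity))
        exact fun t => (lemf_s_pos t).ne'
      refine (hcont.integrableOn_Icc).congr ?_
      filter_upwards [ae_restrict_mem measurableSet_Icc,
        MeasureTheory.ae_restrict_of_ae ae_ne_one] with t ht htne
      have ht1 : t < 1 := lt_of_le_of_ne (le_trans ht.2 hT1) htne
      simp only [Function.comp_apply, smul_eq_mul]
      exact (lemf_key ht.1 ht1).symm
  calc ∫ r in (0:ℝ)..Real.sqrt ((1 - R ^ 4) / (1 + R ^ 4)), g r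
      = ∫ u in (lemf 0)..(lemf T), g u := by rw [hf0, hend]
    _ = ∫ t in (0:ℝ)..T, f' t • (g ∘ lemf) t := hsub.symm
    _ = Real.sqrt 2 * ∫ v in (0:ℝ)..T, 1 / Real.sqrt (1 + v ^ 4) := ?_
  rw [← intervalIntegral.integral_const_mul]
  apply intervalIntegral.integral_congr_ae
  filter_upwards [ae_ne_one] with t htne hmem
  rw [Set.uIoc_of_le hT0] at hmem
  have ht1 : t < 1 := lt_of_le_of_ne (le_trans hmem.2 hT1) htne
  simp only [Function.comp_apply, smul_eq_mul]
  exact lemf_key hmem.1.le ht1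
end
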